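/- Let (P_n) be a sequence of positive integers with P_n/log n → ∞ and P_n/√(n·log n) → 0 as n → ∞. Then for all sufficiently large n: every n-length code B capable of correcting all 3P_n-far deletable error patterns satisfies R(B) ≥ (n/(6P_n) - 1)·log₂(3P_n/64) - 2. -/

import Mathlib

/-- The three kinds of deletable errors: deletion, erasure, substitution (flip). -/
inductive ErrKind : Type
  | D
  | E
  | F
  deriving DecidableEq

instance instFintypeErrKind : Fintype ErrKind where
  elems := {ErrKind.D, ErrKind.E, ErrKind.F}
  complete := by intro x; cases x <;> simp

/-- A binary word of length `n`. -/
abbrev Word (n : ℕ) := Fin n → Bool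

/-- A deletable error pattern of length `n`: a pair `(e, v)`. -/
abbrev Pattern (n : ℕ) := (Fin n → Bool) × (Fin n → ErrKind)

/-- Process a list of (bit, error indicator, error kind) triples in order,
producing the corrupted string over `{0, 1, ε}` (`none` is the erasure symbol). -/
def corruptAux : List (Bool × Bool × ErrKind) → List (Option Bool)
  | [] => []
  | (xi, false, _) :: rest => some xi :: corruptAux rest
  | (_, true, ErrKind.D) :: rest => corruptAux rest
  | (_, true, ErrKind.E) :: rest => none :: corruptAux rest
  | (xi, true, ErrKind.F) :: rest => some (!xi) :: corruptAux rest

/-- The corruption `F_g(x)` of the word `x` by the pattern `g`. -/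
def corrupt {n : ℕ} (g : Pattern n) (x : Word n) : List (Option Bool) :=
  corruptAux (List.ofFn fun i => (x i, g.1 i, g.2 i))

/-- The corruption `F_g(x, t)` of the first `t` bits of `x` by the first `t` entries of `g`. -/
def corruptPrefix {n : ℕ} (g : Pattern n) (x : Word n) (t : ℕ) : List (Option Bool) :=
  corruptAux ((List.ofFn fun i => (x i, g.1 i, g.2 i)).take t)

/-- The number of errors `Σ_i e_i` of a pattern. -/
def errCount {n : ℕ} (g : Pattern n) : ℕ :=
  (Finset.univ.filter fun i => g.1 i = true).card

/-- `E_n(r)`: the set of `n`-length deletable error patterns with at most `r` errors. -/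
def Epat (n r : ℕ) : Finset (Pattern n) :=
  Finset.univ.filter fun g => errCount g ≤ r

/-- A pattern is `P`-far if any two distinct error positions are at distance at least `P`. -/
def IsPFar {n : ℕ} (P : ℕ) (g : Pattern n) : Prop :=
  ∀ i j : Fin n, i ≠ j → g.1 i = true → g.1 j = true →
    (P : ℤ) ≤ |((i : ℕ) : ℤ) - ((j : ℕ) : ℤ)|

/-- The code `C` corrects all error patterns in `F`. -/
def CorrectsIn {n : ℕ} (C : Finset (Word n)) (F : Set (Pattern n)) : Prop :=
  ∀ x₁ ∈ C, ∀ x₂ ∈ C, x₁ ≠ x₂ → ∀ g₁ ∈ F, ∀ g₂ ∈ F, corrupt g₁ x₁ ≠ corrupt g₂ x₂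

/-- The code `C` corrects all error patterns in `F` in real-time with delay at most `d`. -/
def CorrectsRealTime {n : ℕ} (C : Finset (Word n)) (F : Set (Pattern n)) (d : ℕ) : Prop :=
  ∀ z : ℕ, 1 ≤ z → z ≤ n - d → ∀ x₁ ∈ C, ∀ x₂ ∈ C, x₁ ≠ x₂ →
    ∀ g₁ ∈ F, ∀ g₂ ∈ F, corruptPrefix g₁ x₁ (z + d) ≠ corruptPrefix g₂ x₂ (z + d)

/-- The redundancy `R(C) = n - log₂ #C` of an `n`-length code `C`. -/
noncomputable def redundancy {n : ℕ} (C : Finset (Word n)) : ℝ :=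
  (n : ℝ) - Real.logb 2 (C.card)

section Aux

lemma corruptAux_allF : ∀ (l : List (Bool × Bool × ErrKind)),
    (∀ t ∈ l, t.2.2 = ErrKind.F) →
    corruptAux l = l.map (fun t => some (xor t.2.1 t.1))
  | [], _ => rfl
  | (xi, ei, vi) :: rest, h => by
    have hv : vi = ErrKind.F := h _ List.mem_cons_self
    subst hv
    have ih := corruptAux_allF rest (fun t ht => h t (List.mem_cons_of_mem _ ht))
    cases ei <;> simp [corruptAux, ih]

/-- Error-position function for the flip pattern determined by `f`. -/
def flipE (n Q m : ℕ) (f : Fin m → Fin (3*Q)) : Fin n → Bool :=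
  fun i => decide (∃ k : Fin m, (i : ℕ) = 6*Q*(k : ℕ) + ((f k) : ℕ))

/-- The flip pattern determined by `f`. -/
def flipPat (n Q m : ℕ) (f : Fin m → Fin (3*Q)) : Pattern n :=
  (flipE n Q m f, fun _ => ErrKind.F)

lemma corrupt_flipPat (n Q m : ℕ) (f : Fin m → Fin (3*Q)) (x : Word n) :
    corrupt (flipPat n Q m f) x
      = List.ofFn (fun i => some (xor (flipE n Q m f i) (x i))) := by
  unfold corrupt
  rw [corruptAux_allF _ (by
    intro t ht
    rw [List.mem_ofFn] at ht
    obtain ⟨i, rfl⟩ := ht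
    rfl)]
  rw [List.map_ofFn]
  rfl

lemma far_aux (Q k k' r r' : ℕ) (hk : k < k') (hr : r < 3*Q) :
    6*Q*k + r + 3*Q ≤ 6*Q*k' + r' := by
  have h2 : 6*Q*(k+1) ≤ 6*Q*k' := Nat.mul_le_mul_left _ hk
  have h3 : 6*Q*(k+1) = 6*Q*k + 6*Q := by ring
  linarith

lemma unique_decomp {Q k k' r r' : ℕ} (hQ : 0 < Q) (hr : r < 3*Q) (hr' : r' < 3*Q)
    (h : 6*Q*k + r = 6*Q*k' + r') : k = k' ∧ r = r' := by
  rcases lt_trichotomy k k' with hlt | heq | hgt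
  · exfalso; have := far_aux Q k k' r r' hlt hr; linarith
  · subst heq
    exact ⟨rfl, Nat.add_left_cancel h⟩
  · exfalso; have := far_aux Q k' k r' r hgt hr'; linarith

lemma flipPat_far (n Q m : ℕ) (f : Fin m → Fin (3*Q)) :
    IsPFar (3*Q) (flipPat n Q m f) := by
  intro i j hne hi hj
  simp only [flipPat, flipE, decide_eq_true_eq] at hi hj
  obtain ⟨k, hk⟩ := hi
  obtain ⟨k', hk'⟩ := hj
  have hkk : k ≠ k' := by
    rintro rfl
    exact hne (Fin.ext (by rw [hk, hk']))
  have hfin : (3*Q:ℤ) ≤ |((i:ℕ):ℤ) - ((j:ℕ):ℤ)| := by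
    rcases lt_or_gt_of_ne hkk with hlt | hgt
    · have hnat : (i:ℕ) + 3*Q ≤ (j:ℕ) := by
        rw [hk, hk']
        exact far_aux Q _ _ _ _ hlt (f k).isLt
      have h1 : (3*Q:ℤ) ≤ ((j:ℕ):ℤ) - ((i:ℕ):ℤ) := by
        have := hnat; push_cast; omega
      calc (3*Q:ℤ) ≤ ((j:ℕ):ℤ) - ((i:ℕ):ℤ) := h1
        _ ≤ |((j:ℕ):ℤ) - ((i:ℕ):ℤ)| := le_abs_self _
        _ = |((i:ℕ):ℤ) - ((j:ℕ):ℤ)| := abs_sub_comm _ _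
    · have hnat : (j:ℕ) + 3*Q ≤ (i:ℕ) := by
        rw [hk, hk']
        exact far_aux Q _ _ _ _ hgt (f k').isLt
      have h1 : (3*Q:ℤ) ≤ ((i:ℕ):ℤ) - ((j:ℕ):ℤ) := by
        have := hnat; push_cast; omega
      exact h1.trans (le_abs_self _)
  exact_mod_cast hfin

lemma card_bound (n Q : ℕ) (hQ : 0 < Q) (B : Finset (Word n))
    (hB : CorrectsIn B {g : Pattern n | IsPFar (3*Q) g}) :
    B.card * (3*Q) ^ (n / (6*Q)) ≤ 2 ^ n := by
  classical
  set m := n / (6*Q) with hmdef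
  have hmn : 6*Q*m ≤ n := by
    rw [hmdef, mul_comm]
    exact Nat.div_mul_le_self n (6*Q)
  have hpos : ∀ (f : Fin m → Fin (3*Q)) (k : Fin m), 6*Q*(k:ℕ) + ((f k):ℕ) < n := by
    intro f k
    have h1 : ((f k):ℕ) < 3*Q := (f k).isLt
    have h2 : 6*Q*((k:ℕ)+1) ≤ 6*Q*m := Nat.mul_le_mul_left _ k.isLt
    have h3 : 6*Q*((k:ℕ)+1) = 6*Q*(k:ℕ) + 6*Q := by ring
    linarith
  set Φ : Word n × (Fin m → Fin (3*Q)) → Word n :=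
    fun p => (fun i => xor (flipE n Q m p.2 i) (p.1 i)) with hΦ
  have hxor : ∀ a b c : Bool, xor a c = xor b c → a = b := by decide
  have hinj : Set.InjOn Φ ↑(B ×ˢ (Finset.univ : Finset (Fin m → Fin (3*Q)))) := by
    rintro ⟨x, f⟩ hp ⟨x', f'⟩ hp' heq
    rw [Finset.mem_coe, Finset.mem_product] at hp hp'
    have heq' : ∀ i, xor (flipE n Q m f i) (x i) = xor (flipE n Q m f' i) (x' i) := by
      intro i
      have := congrFun heq i
      simpa [hΦ] using this
    have hceq : corrupt (flipPat n Q m f) x = corrupt (flipPat n Q m f') x' := by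
      rw [corrupt_flipPat, corrupt_flipPat]
      exact congrArg List.ofFn (funext fun i => congrArg some (heq' i))
    have hxx : x = x' := by
      by_contra hne
      exact hB x hp.1 x' hp'.1 hne _ (flipPat_far n Q m f) _ (flipPat_far n Q m f') hceq
    subst hxx
    have he : ∀ i, flipE n Q m f i = flipE n Q m f' i := by
      intro i
      exact hxor _ _ _ (heq' i)
    have hf : f = f' := by
      funext k
      have h1 : flipE n Q m f ⟨6*Q*(k:ℕ) + ((f k):ℕ), hpos f k⟩ = true := by
        simp only [flipE, decide_eq_true_eq]
        exact ⟨k, rfl⟩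
      rw [he] at h1
      simp only [flipE, decide_eq_true_eq] at h1
      obtain ⟨k', hk'⟩ := h1
      obtain ⟨hkk, hrr⟩ := unique_decomp hQ (f k).isLt (f' k').isLt hk'
      have : k = k' := Fin.ext hkk
      subst this
      exact Fin.ext hrr
    rw [hf]
  have hcard := Finset.card_le_card_of_injOn Φ
    (fun p _ => Finset.mem_univ (Φ p)) hinj
  rw [Finset.card_product, Finset.card_univ, Finset.card_univ] at hcard
  have e1 : Fintype.card (Fin m → Fin (3*Q)) = (3*Q)^m := by
    simp [Fintype.card_fun]
  have e2 : Fintype.card (Word n) = 2^n := by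
    simp [Fintype.card_fun]
  rw [e1, e2] at hcard
  exact hcard

end Aux

/-- Redundancy lower bound for codes correcting all `3Pₙ`-far deletable error patterns,
growing `Pₙ` (converse part of Theorem 1 of the paper). -/
theorem stmt3 (P : ℕ → ℕ) (hPpos : ∀ n, 0 < P n)
    (hP1 : Filter.Tendsto (fun n : ℕ => (P n : ℝ) / Real.log n) Filter.atTop Filter.atTop)
    (hP2 : Filter.Tendsto (fun n : ℕ => (P n : ℝ) / Real.sqrt ((n : ℝ) * Real.log n))
      Filter.atTop (nhds 0)) :
    ∃ N : ℕ, ∀ n : ℕ, N ≤ n → ∀ B : Finset (Word n),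
      CorrectsIn B {g : Pattern n | IsPFar (3 * P n) g} →
      ((n : ℝ) / (6 * (P n : ℝ)) - 1) * Real.logb 2 (3 * (P n : ℝ) / 64) - 2 ≤
        redundancy B := by
  -- P n → ∞
  have hlog : Filter.Tendsto (fun n : ℕ => Real.log n) Filter.atTop Filter.atTop :=
    Real.tendsto_log_atTop.comp tendsto_natCast_atTop_atTop
  have hPinf : Filter.Tendsto (fun n : ℕ => (P n : ℝ)) Filter.atTop Filter.atTop := by
    refine (hP1.atTop_mul_atTop₀ hlog).congr' ?_
    filter_upwards [hlog.eventually_gt_atTop 0] with n hn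
    field_simp
  obtain ⟨N, hN⟩ := Filter.eventually_atTop.mp (hPinf.eventually_ge_atTop 22)
  refine ⟨N, fun n hn B hB => ?_⟩
  have hQr : (22:ℝ) ≤ ((P n : ℕ) : ℝ) := hN n hn
  set Q := P n with hQdef
  have hQ0 : 0 < Q := hPpos n
  set m := n / (6*Q) with hmdef
  have key : B.card * (3*Q)^m ≤ 2^n := card_bound n Q hQ0 B hB
  have hmn : 6*Q*m ≤ n := by
    rw [hmdef, mul_comm]; exact Nat.div_mul_le_self n (6*Q)
  have hQr' : (0:ℝ) < (Q:ℝ) := by linarith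
  have h3Qpos : (0:ℝ) < 3*(Q:ℝ) := by linarith
  -- (3Q)^m ≤ 2^n
  have hpow : (3*Q)^m ≤ 2^n := by
    calc (3*Q)^m ≤ (2^(6*Q))^m := by
          refine Nat.pow_le_pow_left ?_ m
          have := Nat.lt_two_pow_self (n := 6*Q)
          omega
      _ = 2^(6*Q*m) := by rw [← pow_mul]
      _ ≤ 2^n := Nat.pow_le_pow_right (by norm_num) hmn
  -- main log bound: m * logb 2 (3Q) ≤ n - logb 2 |B|
  have hlogb2 : Real.logb 2 ((2:ℝ)^n) = (n:ℝ) := by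
    rw [Real.logb_pow, Real.logb_self_eq_one (by norm_num)]
    ring
  have hmain : (m:ℝ) * Real.logb 2 (3*(Q:ℝ)) ≤ (n:ℝ) - Real.logb 2 B.card := by
    rcases Nat.eq_zero_or_pos B.card with hc | hc
    · rw [hc]
      simp only [Nat.cast_zero, Real.logb_zero, sub_zero]
      have h1 : ((3*Q:ℕ):ℝ)^m ≤ (2:ℝ)^n := by exact_mod_cast hpow
      have h2 := Real.logb_le_logb_of_le (b := 2) (by norm_num)
        (by positivity : (0:ℝ) < ((3*Q:ℕ):ℝ)^m) h1
      rw [Real.logb_pow, hlogb2] at h2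
      calc (m:ℝ) * Real.logb 2 (3*(Q:ℝ)) = (m:ℝ) * Real.logb 2 ((3*Q:ℕ):ℝ) := by
            push_cast; ring_nf
        _ ≤ (n:ℝ) := h2
    · have hc' : (0:ℝ) < (B.card:ℝ) := by exact_mod_cast hc
      have h1 : (B.card:ℝ) * ((3*Q:ℕ):ℝ)^m ≤ (2:ℝ)^n := by exact_mod_cast key
      have h2 := Real.logb_le_logb_of_le (b := 2) (by norm_num)
        (by positivity : (0:ℝ) < (B.card:ℝ) * ((3*Q:ℕ):ℝ)^m) h1
      rw [Real.logb_mul (ne_of_gt hc') (by positivity), Real.logb_pow, hlogb2] at h2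
      have h3 : ((3*Q:ℕ):ℝ) = 3*(Q:ℝ) := by push_cast; ring
      rw [h3] at h2
      linarith
  -- n/(6Q) - 1 ≤ m
  have hmr : (n:ℝ)/(6*(Q:ℝ)) - 1 ≤ (m:ℝ) := by
    have h1 := Nat.div_add_mod n (6*Q)
    have h2 : n % (6*Q) < 6*Q := Nat.mod_lt _ (by omega)
    rw [← hmdef] at h1
    have hnat : n < 6*Q*m + 6*Q := by omega
    have hreal : (n:ℝ) < 6*(Q:ℝ)*((m:ℝ)+1) := by
      have : ((n:ℕ):ℝ) < ((6*Q*m + 6*Q : ℕ):ℝ) := by exact_mod_cast hnat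
      push_cast at this
      linarith
    have : (n:ℝ)/(6*(Q:ℝ)) < (m:ℝ)+1 := by
      rw [div_lt_iff₀ (by linarith)]
      linarith
    linarith
  have hL0 : 0 ≤ Real.logb 2 (3*(Q:ℝ)/64) :=
    Real.logb_nonneg (by norm_num) (by linarith)
  have hL : Real.logb 2 (3*(Q:ℝ)/64) ≤ Real.logb 2 (3*(Q:ℝ)) :=
    Real.logb_le_logb_of_le (by norm_num) (by linarith) (by linarith)
  have hm0 : (0:ℝ) ≤ (m:ℝ) := Nat.cast_nonneg m
  unfold redundancy
  calc ((n:ℝ)/(6*(Q:ℝ)) - 1) * Real.logb 2 (3*(Q:ℝ)/64) - 2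
      ≤ (m:ℝ) * Real.logb 2 (3*(Q:ℝ)/64) := by nlinarith
    _ ≤ (m:ℝ) * Real.logb 2 (3*(Q:ℝ)) := mul_le_mul_of_nonneg_left hL hm0
    _ ≤ (n:ℝ) - Real.logb 2 B.card := hmain
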